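/- Let X be a compact metric space and let Γ be a group of homeomorphisms of X such that the family Γ (together with all inverses, which belong to Γ since Γ is a group) is equicontinuous. Let G be the closure of Γ inside the space C(X, X) of continuous self-maps of X with the supremum metric. Then every g ∈ G is a homeomorphism of X onto X, and moreover its inverse g⁻¹ also belongs to G. -/

import Mathlib

theorem closure_of_equicontinuous_homeo_group_consists_of_homeos
    {X : Type*} [MetricSpace X] [CompactSpace X]
    (Γ : Set (X ≃ₜ X))
    (hrefl : Homeomorph.refl X ∈ Γ)
    (htrans : ∀ γ ∈ Γ, ∀ γ' ∈ Γ, γ.trans γ' ∈ Γ)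
    (hsymm : ∀ γ ∈ Γ, γ.symm ∈ Γ)
    (hequi : ∀ ε > (0 : ℝ), ∃ δ > (0 : ℝ), ∀ γ ∈ Γ, ∀ x x' : X,
      dist x x' < δ → dist (γ x) (γ x') ≤ ε)
    (G : Set C(X, X)) (hG : G = closure {f : C(X, X) | ∃ γ ∈ Γ, ⇑f = ⇑γ}) :
    ∀ g ∈ G, ∃ h : X ≃ₜ X, ⇑h = ⇑g ∧ ∃ f : C(X, X), ⇑f = ⇑h.symm ∧ f ∈ G := by
  subst hG
  intro g hg
  obtain ⟨u, hu, hlim0⟩ := mem_closure_iff_seq_limit.mp hg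
  choose γ hγΓ hγeq using hu
  set v : ℕ → C(X, X) := fun n => ((γ n).symm : C(X, X)) with hv
  have hvapp : ∀ n y, v n y = (γ n).symm y := fun n y => rfl
  have huapp : ∀ n x, u n x = γ n x := fun n x => by rw [hγeq n]
  have hlim := Metric.tendsto_atTop.mp hlim0
  -- (v n) is uniformly Cauchy
  have hcv : CauchySeq v := by
    rw [Metric.cauchySeq_iff]
    intro ε hε
    obtain ⟨δ, hδ, hδ'⟩ := hequi (ε / 2) (by linarith)
    obtain ⟨N, hN⟩ := hlim (δ / 2) (by linarith)
    refine ⟨N, fun m hm n hn => ?_⟩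
    have hle : dist (v m) (v n) ≤ ε / 2 := by
      rw [ContinuousMap.dist_le (by linarith)]
      intro y
      have humn : dist (u m) (u n) < δ := by
        have h1 := hN m hm
        have h2 := hN n hn
        calc dist (u m) (u n) ≤ dist (u m) g + dist g (u n) := dist_triangle _ _ _
          _ < δ / 2 + δ / 2 := by rw [dist_comm g (u n)]; linarith
          _ = δ := by ring
      have h1 : dist (γ m ((γ n).symm y)) y < δ := by
        have h2 := ContinuousMap.dist_apply_le_dist (f := u m) (g := u n) ((γ n).symm y)
        rw [huapp, huapp, Homeomorph.apply_symm_apply] at h2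
        exact lt_of_le_of_lt h2 humn
      have h3 := hδ' (γ m).symm (hsymm _ (hγΓ m)) (γ m ((γ n).symm y)) y h1
      rw [Homeomorph.symm_apply_apply] at h3
      rw [hvapp, hvapp, dist_comm]
      exact h3
    exact lt_of_le_of_lt hle (by linarith)
  obtain ⟨f, hf0⟩ := cauchySeq_tendsto_of_complete hcv
  have hf := Metric.tendsto_atTop.mp hf0
  have hfG : f ∈ closure {f : C(X, X) | ∃ γ ∈ Γ, ⇑f = ⇑γ} :=
    mem_closure_of_tendsto hf0 (Filter.Eventually.of_forall fun n =>
      ⟨(γ n).symm, hsymm _ (hγΓ n), rfl⟩)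
  -- uniform estimate for g
  have hgU : ∀ ε > (0 : ℝ), ∃ δ > (0 : ℝ), ∀ x x' : X,
      dist x x' < δ → dist (g x) (g x') ≤ ε := by
    intro ε hε
    obtain ⟨δ, hδ, hδ'⟩ := hequi (ε / 2) (by linarith)
    refine ⟨δ, hδ, fun x x' hxx => ?_⟩
    obtain ⟨N, hN⟩ := hlim (ε / 4) (by linarith)
    have h1 := ContinuousMap.dist_apply_le_dist (f := u N) (g := g) x
    have h2 := ContinuousMap.dist_apply_le_dist (f := u N) (g := g) x'
    rw [huapp] at h1 h2
    have h3 := hδ' (γ N) (hγΓ N) x x' hxx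
    have h4 := hN N le_rfl
    calc dist (g x) (g x') ≤ dist (g x) (γ N x) + dist (γ N x) (γ N x') + dist (γ N x') (g x') :=
          dist_triangle4 _ _ _ _
      _ ≤ ε / 4 + ε / 2 + ε / 4 := by
          rw [dist_comm (g x)]
          exact add_le_add (add_le_add (le_trans h1 (le_of_lt h4)) h3)
            (le_trans h2 (le_of_lt h4))
      _ = ε := by ring
  -- uniform estimate for f
  have hfU : ∀ ε > (0 : ℝ), ∃ δ > (0 : ℝ), ∀ x x' : X,
      dist x x' < δ → dist (f x) (f x') ≤ ε := by
    intro ε hε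
    obtain ⟨δ, hδ, hδ'⟩ := hequi (ε / 2) (by linarith)
    refine ⟨δ, hδ, fun x x' hxx => ?_⟩
    obtain ⟨N, hN⟩ := hf (ε / 4) (by linarith)
    have h1 := ContinuousMap.dist_apply_le_dist (f := v N) (g := f) x
    have h2 := ContinuousMap.dist_apply_le_dist (f := v N) (g := f) x'
    rw [hvapp] at h1 h2
    have h3 := hδ' (γ N).symm (hsymm _ (hγΓ N)) x x' hxx
    have h4 := hN N le_rfl
    calc dist (f x) (f x')
        ≤ dist (f x) ((γ N).symm x) + dist ((γ N).symm x) ((γ N).symm x')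
          + dist ((γ N).symm x') (f x') := dist_triangle4 _ _ _ _
      _ ≤ ε / 4 + ε / 2 + ε / 4 := by
          rw [dist_comm (f x)]
          exact add_le_add (add_le_add (le_trans h1 (le_of_lt h4)) h3)
            (le_trans h2 (le_of_lt h4))
      _ = ε := by ring
  -- g ∘ f = id
  have hgf : ∀ y, g (f y) = y := by
    intro y
    apply eq_of_forall_dist_le
    intro ε hε
    obtain ⟨δ, hδ, hδ'⟩ := hgU (ε / 2) (by linarith)
    obtain ⟨N1, hN1⟩ := hf δ hδ
    obtain ⟨N2, hN2⟩ := hlim (ε / 2) (by linarith)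
    set n := max N1 N2
    have hfv : dist (f y) (v n y) < δ := by
      have := ContinuousMap.dist_apply_le_dist (f := v n) (g := f) y
      rw [dist_comm]
      exact lt_of_le_of_lt this (hN1 n (le_max_left _ _))
    have h1 : dist (g (f y)) (g (v n y)) ≤ ε / 2 := hδ' _ _ hfv
    have h2 : dist (g (v n y)) y ≤ ε / 2 := by
      have heq : u n (v n y) = y := by
        rw [huapp, hvapp, Homeomorph.apply_symm_apply]
      have := ContinuousMap.dist_apply_le_dist (f := g) (g := u n) (v n y)
      rw [heq, dist_comm g (u n)] at this
      exact le_trans this (le_of_lt (hN2 n (le_max_right _ _)))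
    calc dist (g (f y)) y ≤ dist (g (f y)) (g (v n y)) + dist (g (v n y)) y := dist_triangle _ _ _
      _ ≤ ε / 2 + ε / 2 := add_le_add h1 h2
      _ = ε := by ring
  -- f ∘ g = id
  have hfg : ∀ x, f (g x) = x := by
    intro x
    apply eq_of_forall_dist_le
    intro ε hε
    obtain ⟨δ, hδ, hδ'⟩ := hfU (ε / 2) (by linarith)
    obtain ⟨N1, hN1⟩ := hlim δ hδ
    obtain ⟨N2, hN2⟩ := hf (ε / 2) (by linarith)
    set n := max N1 N2
    have hgu : dist (g x) (u n x) < δ := by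
      have := ContinuousMap.dist_apply_le_dist (f := u n) (g := g) x
      rw [dist_comm]
      exact lt_of_le_of_lt this (hN1 n (le_max_left _ _))
    have h1 : dist (f (g x)) (f (u n x)) ≤ ε / 2 := hδ' _ _ hgu
    have h2 : dist (f (u n x)) x ≤ ε / 2 := by
      have heq : v n (u n x) = x := by
        rw [huapp, hvapp, Homeomorph.symm_apply_apply]
      have := ContinuousMap.dist_apply_le_dist (f := f) (g := v n) (u n x)
      rw [heq, dist_comm f (v n)] at this
      exact le_trans this (le_of_lt (hN2 n (le_max_right _ _)))
    calc dist (f (g x)) x ≤ dist (f (g x)) (f (u n x)) + dist (f (u n x)) x := dist_triangle _ _ _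
      _ ≤ ε / 2 + ε / 2 := add_le_add h1 h2
      _ = ε := by ring
  exact ⟨{ toFun := g, invFun := f, left_inv := hfg, right_inv := hgf,
           continuous_toFun := g.continuous, continuous_invFun := f.continuous },
         rfl, f, rfl, hfG⟩
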